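/- (Fan's maximum principle) For a self-adjoint operator A on ℂ^d and k ∈ [d], the sum of the k largest eigenvalues of A equals the maximum of tr(P_W A) over all orthogonal projections P_W onto k-dimensional subspaces W of ℂ^d. -/

import Mathlib

open Matrix

/-- Sum of the `k` largest values of `f` (as the sup of sums over `k`-subsets). -/
noncomputable def sk {ι : Type*} [Fintype ι] (f : ι → ℝ) (k : ℕ) : ℝ :=
  sSup {x | ∃ S : Finset ι, S.card = k ∧ x = ∑ i ∈ S, f i}

lemma rclofReal (r : ℝ) : (RCLike.ofReal r : ℂ) = (r : ℂ) := rfl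

lemma exists_top_subset {d k : ℕ} (f : Fin d → ℝ) (hkd : k ≤ d) :
    ∃ S : Finset (Fin d), S.card = k ∧
      (∀ T : Finset (Fin d), T.card = k → ∑ i ∈ T, f i ≤ ∑ i ∈ S, f i) ∧
      (∀ i ∈ S, ∀ j ∉ S, f j ≤ f i) := by
  have hne : (Finset.univ.powersetCard k : Finset (Finset (Fin d))).Nonempty :=
    Finset.powersetCard_nonempty.2 (by simpa using hkd)
  obtain ⟨S, hS, hmax⟩ := Finset.exists_max_image _ (fun T => ∑ i ∈ T, f i) hne
  simp only [Finset.mem_powersetCard_univ] at hS hmax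
  refine ⟨S, hS, fun T hT => hmax T hT, ?_⟩
  intro i hi j hj
  by_contra h
  push_neg at h
  have hcard : (insert j (S.erase i)).card = k := by
    rw [Finset.card_insert_of_notMem (fun hmem => hj (Finset.erase_subset _ _ hmem)),
      Finset.card_erase_of_mem hi, hS]
    have : 1 ≤ k := hS ▸ Finset.card_pos.mpr ⟨i, hi⟩
    omega
  have := hmax _ hcard
  rw [Finset.sum_insert (fun hmem => hj (Finset.erase_subset _ _ hmem)),
    Finset.sum_erase_eq_sub hi] at this
  linarith

lemma sum_mul_le_top {d k : ℕ} (f t : Fin d → ℝ) (S : Finset (Fin d))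
    (hS : S.card = k) (htop : ∀ i ∈ S, ∀ j ∉ S, f j ≤ f i)
    (ht0 : ∀ i, 0 ≤ t i) (ht1 : ∀ i, t i ≤ 1)
    (hsum : ∑ i, t i = k) (hk1 : 1 ≤ k) :
    ∑ i, f i * t i ≤ ∑ i ∈ S, f i := by
  have hSne : S.Nonempty := Finset.card_pos.mp (by omega)
  obtain ⟨i₀, hi₀, hmin⟩ := Finset.exists_min_image S f hSne
  set m := f i₀ with hm
  have hout : ∀ j ∉ S, f j ≤ m := fun j hj => htop i₀ hi₀ j hj
  have split : ∑ i, f i * t i = ∑ i ∈ S, f i * t i + ∑ i ∈ Sᶜ, f i * t i :=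
    (Finset.sum_add_sum_compl S _).symm
  have hts : ∑ i ∈ Sᶜ, t i = k - ∑ i ∈ S, t i := by
    have := Finset.sum_add_sum_compl S t
    rw [hsum] at this; linarith
  have h1 : ∑ i ∈ Sᶜ, f i * t i ≤ m * (k - ∑ i ∈ S, t i) := by
    rw [← hts, Finset.mul_sum]
    refine Finset.sum_le_sum fun j hj => ?_
    have hjS : j ∉ S := by simpa using hj
    exact mul_le_mul_of_nonneg_right (hout j hjS) (ht0 j)
  have h2 : ∑ i ∈ S, f i * t i + m * (k - ∑ i ∈ S, t i) ≤ ∑ i ∈ S, f i := by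
    have key : ∑ i ∈ S, m * (1 - t i) = m * ((k : ℝ) - ∑ i ∈ S, t i) := by
      have h4 : ∑ i ∈ S, m * (1 - t i) = ∑ i ∈ S, (m - m * t i) := by
        simp [mul_sub]
      rw [h4, Finset.sum_sub_distrib, Finset.sum_const, hS, ← Finset.mul_sum]
      -- (cast handled)
      ring
    rw [← key, ← Finset.sum_add_distrib]
    refine Finset.sum_le_sum fun i hi => ?_
    have h3 : m ≤ f i := hmin i hi
    nlinarith [ht1 i, ht0 i]
  linarith

open Matrix Finset

section helpers

variable {d : ℕ}

lemma conj_form_mul {U P Q : Matrix (Fin d) (Fin d) ℂ} (hU : star U * U = 1) :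
    (U * P * star U) * (U * Q * star U) = U * (P * Q) * star U := by
  calc (U * P * star U) * (U * Q * star U)
      = U * P * (star U * U) * Q * star U := by
        simp only [Matrix.mul_assoc]
    _ = U * (P * Q) * star U := by rw [hU]; simp only [Matrix.mul_one, Matrix.mul_assoc]

lemma trace_conj {U X : Matrix (Fin d) (Fin d) ℂ} (hU : star U * U = 1) :
    (U * X * star U).trace = X.trace := by
  rw [trace_mul_cycle, hU, Matrix.one_mul]

/-- Diagonal entries of a Hermitian idempotent have nonnegative real part. -/
lemma diag_re_nonneg {Q : Matrix (Fin d) (Fin d) ℂ} (hH : Qᴴ = Q) (h2 : Q * Q = Q)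
    (i : Fin d) : 0 ≤ (Q i i).re := by
  have hQ : Q = Qᴴ * Q := by rw [hH, h2]
  have : Q i i = ∑ j, (starRingEnd ℂ) (Q j i) * Q j i := by
    conv_lhs => rw [hQ]
    simp [Matrix.mul_apply, Matrix.conjTranspose_apply]
  rw [this, Complex.re_sum]
  apply Finset.sum_nonneg
  intro j _
  have : (starRingEnd ℂ) (Q j i) * Q j i = (Complex.normSq (Q j i) : ℂ) :=
    (Complex.normSq_eq_conj_mul_self).symm
  rw [this, Complex.ofReal_re]
  exact Complex.normSq_nonneg _

/-- The real part of the trace of a Hermitian idempotent equals its rank. -/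
lemma trace_re_eq_rank {P : Matrix (Fin d) (Fin d) ℂ} (hP : P.IsHermitian)
    (h2 : P * P = P) : (P.trace).re = P.rank := by
  set μ := hP.eigenvalues with hμ
  set V : Matrix (Fin d) (Fin d) ℂ := (hP.eigenvectorUnitary : Matrix (Fin d) (Fin d) ℂ) with hV
  have hU1 : star V * V = 1 := by
    exact (Matrix.mem_unitaryGroup_iff').mp hP.eigenvectorUnitary.2
  have hU2 : V * star V = 1 := by
    exact (Matrix.mem_unitaryGroup_iff).mp hP.eigenvectorUnitary.2
  have hD : star V * P * V = diagonal (RCLike.ofReal ∘ μ) := by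
    have hs : P = V * diagonal (RCLike.ofReal ∘ μ) * star V := hP.spectral_theorem
    conv_lhs => rw [hs]
    rw [show star V * (V * diagonal (RCLike.ofReal ∘ μ) * star V) * V
        = (star V * V) * diagonal (RCLike.ofReal ∘ μ) * (star V * V) by
        simp only [Matrix.mul_assoc], hU1, Matrix.one_mul, Matrix.mul_one]
  -- eigenvalues are 0 or 1
  have hDD : (diagonal (RCLike.ofReal ∘ μ) : Matrix (Fin d) (Fin d) ℂ)
        * diagonal (RCLike.ofReal ∘ μ)
      = diagonal (RCLike.ofReal ∘ μ) := by
    rw [← hD]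
    calc (star V * P * V) * (star V * P * V)
        = star V * (P * (V * star V) * P) * V := by simp only [Matrix.mul_assoc]
      _ = star V * P * V := by rw [hU2]; simp only [Matrix.mul_one, Matrix.mul_assoc, h2]

  have h01 : ∀ i, μ i = 0 ∨ μ i = 1 := by
    intro i
    have := congrFun (congrFun hDD i) i
    simp only [diagonal_mul_diagonal, diagonal_apply_eq, Function.comp_apply, Pi.mul_apply] at this
    have h : (μ i : ℂ) * (μ i : ℂ) = (μ i : ℂ) := this
    have h2' : μ i * μ i = μ i := by exact_mod_cast h
    have : μ i * (μ i - 1) = 0 := by ring_nf; linarith [h2']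
    rcases mul_eq_zero.mp this with h | h
    · exact Or.inl h
    · right; linarith
  -- trace P = sum of eigenvalues
  have htr : P.trace = ∑ i, (μ i : ℂ) := by
    conv_lhs => rw [hP.spectral_theorem]
    change (V * diagonal (RCLike.ofReal ∘ μ) * star V).trace = _
    rw [trace_conj hU1, trace_diagonal]
    rfl
  have hrank : P.rank = Fintype.card {i // μ i ≠ 0} := hP.rank_eq_card_non_zero_eigs
  have hsum : ∑ i, μ i = (Fintype.card {i // μ i ≠ 0} : ℝ) := by
    rw [Fintype.card_subtype]
    rw [← Finset.sum_filter_ne_zero Finset.univ]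
    rw [Finset.card_eq_sum_ones]
    push_cast
    apply Finset.sum_congr rfl
    intro i hi
    simp only [Finset.mem_filter] at hi
    rcases h01 i with h | h
    · exact absurd h hi.2
    · rw [h]
  rw [htr, Complex.re_sum]
  simp only [Complex.ofReal_re]
  rw [hsum, hrank]

end helpers

theorem stmt1 {d : ℕ} (A : Matrix (Fin d) (Fin d) ℂ) (hA : A.IsHermitian)
    (k : ℕ) (hk1 : 1 ≤ k) (hkd : k ≤ d) :
    IsGreatest {x : ℝ | ∃ P : Matrix (Fin d) (Fin d) ℂ,
        P.IsHermitian ∧ P * P = P ∧ P.rank = k ∧ x = ((P * A).trace).re}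
      (sk hA.eigenvalues k) := by
  set lam := hA.eigenvalues with hlam
  set U : Matrix (Fin d) (Fin d) ℂ := (hA.eigenvectorUnitary : Matrix (Fin d) (Fin d) ℂ)
    with hUdef
  have hU1 : star U * U = 1 := (Matrix.mem_unitaryGroup_iff').mp hA.eigenvectorUnitary.2
  have hU2 : U * star U = 1 := (Matrix.mem_unitaryGroup_iff).mp hA.eigenvectorUnitary.2
  set Lam : Matrix (Fin d) (Fin d) ℂ := diagonal (RCLike.ofReal ∘ lam) with hLam
  have hAeq : A = U * Lam * star U := hA.spectral_theorem
  obtain ⟨S, hScard, hSmax, hStop⟩ := exists_top_subset lam hkd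
  have hsk : sk lam k = ∑ i ∈ S, lam i := by
    apply IsGreatest.csSup_eq
    exact ⟨⟨S, hScard, rfl⟩, by rintro x ⟨T, hT, rfl⟩; exact hSmax T hT⟩
  rw [hsk]
  constructor
  · -- membership: the projection onto the top-k eigenspace
    set w : Fin d → ℂ := fun i => if i ∈ S then 1 else 0 with hw
    have hww : w * w = w := by
      funext i; by_cases h : i ∈ S <;> simp [hw, h]
    have hsw : star w = w := by
      funext i; by_cases h : i ∈ S <;> simp [hw, h]
    set P : Matrix (Fin d) (Fin d) ℂ := U * diagonal w * star U with hP
    refine ⟨P, ?_, ?_, ?_, ?_⟩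
    · -- Hermitian
      show Pᴴ = P
      rw [hP]
      simp only [conjTranspose_mul, conjTranspose_conjTranspose, diagonal_conjTranspose, hsw,
        star_eq_conjTranspose, Matrix.mul_assoc]
    · rw [hP, conj_form_mul hU1, diagonal_mul_diagonal]
      have h : (fun i => w i * w i) = w := funext fun i => congrFun hww i
      rw [h]
    · -- rank
      have h1 : IsUnit U.det := isUnit_det_of_right_inverse hU2
      have h2 : IsUnit (star U).det := isUnit_det_of_right_inverse hU1
      rw [hP, Matrix.mul_assoc, rank_mul_eq_right_of_isUnit_det U _ h1,
        rank_mul_eq_left_of_isUnit_det (star U) _ h2, rank_diagonal]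
      rw [Fintype.card_subtype, ← hScard]
      congr 1
      ext i
      simp [hw]
    · -- trace
      have : P * A = U * (diagonal w * Lam) * star U := by
        rw [hAeq, hP, conj_form_mul hU1]
      rw [this, trace_conj hU1]
      have h4 : (diagonal w * Lam).trace = ((∑ i ∈ S, lam i : ℝ) : ℂ) := by
        rw [hLam, diagonal_mul_diagonal, trace_diagonal]
        simp only [Pi.mul_apply, hw, Function.comp_apply, ite_mul, one_mul, zero_mul,
          Finset.sum_ite_mem, Finset.univ_inter, rclofReal]
        rw [Complex.ofReal_sum]
      rw [h4, Complex.ofReal_re]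
  · -- upper bound
    rintro x ⟨P, hPH, hP2, hPrank, rfl⟩
    set Q : Matrix (Fin d) (Fin d) ℂ := star U * P * U with hQ
    have hQH : Qᴴ = Q := by
      rw [hQ]
      simp only [conjTranspose_mul, conjTranspose_conjTranspose, hPH.eq,
        star_eq_conjTranspose, Matrix.mul_assoc]
    have hQ2 : Q * Q = Q := by
      rw [hQ]
      calc (star U * P * U) * (star U * P * U)
          = star U * (P * (U * star U) * P) * U := by simp only [Matrix.mul_assoc]
        _ = star U * P * U := by rw [hU2]; simp only [Matrix.mul_one, Matrix.mul_assoc, hP2]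
    set t : Fin d → ℝ := fun i => (Q i i).re with ht
    have ht0 : ∀ i, 0 ≤ t i := fun i => diag_re_nonneg hQH hQ2 i
    have ht1 : ∀ i, t i ≤ 1 := by
      intro i
      have hRH : (1 - Q)ᴴ = 1 - Q := by
        rw [conjTranspose_sub, hQH, conjTranspose_one]
      have hR2 : (1 - Q) * (1 - Q) = 1 - Q := by
        simp only [Matrix.mul_sub, Matrix.sub_mul, Matrix.one_mul, Matrix.mul_one, hQ2]
        abel
      have := diag_re_nonneg hRH hR2 i
      have h1 : ((1 - Q) i i) = 1 - Q i i := by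
        simp [Matrix.sub_apply, Matrix.one_apply_eq]
      rw [h1] at this
      simp only [Complex.sub_re, Complex.one_re] at this
      linarith
    have htsum : ∑ i, t i = k := by
      have h1 : ∑ i, Q i i = Q.trace := rfl
      have h2 : Q.trace = P.trace := by
        rw [hQ, trace_mul_cycle, hU2, Matrix.one_mul]
      have h3 : (P.trace).re = P.rank := trace_re_eq_rank hPH hP2
      have : ∑ i, t i = (Q.trace).re := by
        rw [← h1, Complex.re_sum]
      rw [this, h2, h3, hPrank]
    have hx : ((P * A).trace).re = ∑ i, lam i * t i := by
      have h1 : (P * A).trace = (Q * Lam).trace := by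
        rw [hAeq]
        rw [show P * (U * Lam * star U) = (P * U * Lam) * star U by
          simp only [Matrix.mul_assoc]]
        rw [trace_mul_comm]
        congr 1
        simp only [hQ, Matrix.mul_assoc]
      have h2 : (Q * Lam).trace = ∑ i, Q i i * (lam i : ℂ) := by
        simp [Matrix.trace, Matrix.diag, hLam, Matrix.mul_diagonal]
      rw [h1, h2, Complex.re_sum]
      apply Finset.sum_congr rfl
      intro i _
      simp [ht, Complex.mul_re, mul_comm]
    rw [hx]
    exact le_trans (sum_mul_le_top lam t S hScard hStop ht0 ht1 htsum hk1) (le_refl _)
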